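/- For the synchronous generator, the energy-space-to-physical control mapping is exact: if the turbine dynamics T_t P_m'(t) = K_t a(t) - P_m(t) hold and the valve position is chosen as a(t) = (T_t (2 ω'(t) P_m(t)/ω(t) - u_z(t)) + P_m(t)) / K_t, then the realized control reactive power rate satisfies 2 (P_m(t)/ω(t)) ω'(t) - P_m'(t) = u_z(t) for all t, i.e., Q̇^u = (P_m/ω) ω' - ω · (d/dt)(P_m/ω) equals the energy-space primary control input u_z. -/
import Mathlib


/-- For the synchronous generator, the energy-space-to-physical
control mapping is exact: if the turbine dynamics hold and the valve position is
chosen by the stated formula, then the realized control reactive power rate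
equals the energy-space primary control input `u_z`. -/
theorem generator_control_mapping_exact
    (Kt Tt : ℝ) (hKt : 0 < Kt) (hTt : 0 < Tt)
    (ω Pm a uz : ℝ → ℝ)
    (hω : Differentiable ℝ ω) (hPm : Differentiable ℝ Pm)
    (hωpos : ∀ t : ℝ, 0 < ω t)
    (hturb : ∀ t : ℝ, Tt * deriv Pm t = Kt * a t - Pm t)
    (hvalve : ∀ t : ℝ,
      a t = (Tt * (2 * deriv ω t * Pm t / ω t - uz t) + Pm t) / Kt) :
    ∀ t : ℝ,
      2 * (Pm t / ω t) * deriv ω t - deriv Pm t = uz t ∧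
      (Pm t / ω t) * deriv ω t - ω t * deriv (fun s => Pm s / ω s) t = uz t := by
  intro t
  have hωt := (hωpos t).ne'
  have h1 := hturb t
  rw [hvalve t, mul_div_assoc', mul_comm Kt, mul_div_assoc, div_self hKt.ne',
    mul_one] at h1
  have hP : deriv Pm t = 2 * deriv ω t * Pm t / ω t - uz t := by
    have := mul_left_cancel₀ hTt.ne' (by linarith : Tt * deriv Pm t
      = Tt * (2 * deriv ω t * Pm t / ω t - uz t))
    exact this
  have hd : deriv (fun s => Pm s / ω s) t
      = (deriv Pm t * ω t - Pm t * deriv ω t) / (ω t) ^ 2 :=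
    deriv_div (hPm t) (hω t) hωt
  constructor
  · rw [hP]; field_simp; ring
  · rw [hd, hP]; field_simp; ring
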